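/- arXiv:2009.09418 — 4 statements merged into one kernel-verified Lean document; each statement's English description precedes it below -/
import Mathlib

section
/- Let ζ₁ be a positive random variable with P(ζ₁ > y) ∼ c e^{−γy} as y → ∞ for constants c > 0 and γ > 0, whose law puts no mass at zero, let λ > 0, and let X̃₁ be a random variable such that conditional on ζ₁, X̃₁ is geometric on {1,2,…} with parameter e^{−λζ₁}, i.e. P(X̃₁ > k) = E[(1 − e^{−λζ₁})^k] for all k ∈ ℕ. Set a = γ/λ. Then P(X̃₁ > k) ∼ c Γ(1+a) k^{−a} as k → ∞ (where ∼ means the ratio of the two sides tends to 1). -/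
open MeasureTheory Filter

lemma aux_tail (ν : Measure ℝ) (c γ lam : ℝ) (hγ : 0 < γ) (hlam : 0 < lam)
    (htail : Tendsto (fun y : ℝ => (ν {x | y < x}).toReal / (c * Real.exp (-γ * y)))
      atTop (nhds 1)) :
    Tendsto (fun s : ℝ => (ν {x | Real.exp (-lam * x) < s}).toReal / (c * s ^ (γ / lam)))
      (nhdsWithin 0 (Set.Ioi 0)) (nhds 1) := by
  have hcomp : Tendsto (fun s : ℝ => -Real.log s / lam) (nhdsWithin 0 (Set.Ioi 0)) atTop := by
    apply Tendsto.atTop_div_const hlam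
    exact tendsto_neg_atBot_atTop.comp Real.tendsto_log_nhdsGT_zero
  refine (htail.comp hcomp).congr' ?_
  filter_upwards [self_mem_nhdsWithin] with s hs
  have hs' : (0 : ℝ) < s := hs
  have hset : {x : ℝ | Real.exp (-lam * x) < s} = {x : ℝ | -Real.log s / lam < x} := by
    ext x
    simp only [Set.mem_setOf_eq]
    rw [← Real.lt_log_iff_exp_lt hs', div_lt_iff₀ hlam, neg_lt]
    constructor <;> intro h <;> nlinarith
  have hexp : Real.exp (-γ * (-Real.log s / lam)) = s ^ (γ / lam) := by
    rw [Real.rpow_def_of_pos hs']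
    congr 1
    field_simp
  simp only [Function.comp_apply]
  rw [hset, hexp]

lemma aux_key (ν : Measure ℝ) [IsProbabilityMeasure ν] (lam : ℝ) (hlam : 0 < lam)
    (hpos : ν (Set.Iic 0) = 0) (n : ℕ) (hn : 1 ≤ n) :
    ∫ x, (1 - Real.exp (-lam * x)) ^ n ∂ν
      = ∫ s in Set.Ioc (0 : ℝ) (n : ℝ),
          (1 - s / n) ^ (n - 1) * (ν {x | Real.exp (-lam * x) < s / n}).toReal := by
  have hn0 : (0 : ℝ) < n := by exact_mod_cast hn
  have hnne : (n : ℝ) ≠ 0 := ne_of_gt hn0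
  set F : ℝ → ℝ → ℝ := fun x s =>
    if Real.exp (-lam * x) < s / n ∧ s ≤ n then (1 - s / n) ^ (n - 1) else 0 with hF
  set μs : Measure ℝ := volume.restrict (Set.Ioc (0 : ℝ) (n : ℝ)) with hμs
  haveI : IsFiniteMeasure μs := by
    constructor
    rw [hμs, Measure.restrict_apply_univ]
    exact measure_Ioc_lt_top
  have hFeq : Function.uncurry F = fun p : ℝ × ℝ =>
      if Real.exp (-lam * p.1) < p.2 / n ∧ p.2 ≤ n then (1 - p.2 / n) ^ (n - 1) else 0 := by
    ext ⟨x, s⟩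
    simp [hF, Function.uncurry]
  have hFmeas : Measurable (Function.uncurry F) := by
    rw [hFeq]
    refine Measurable.ite ?_ (by fun_prop) measurable_const
    have h1 : MeasurableSet {p : ℝ × ℝ | Real.exp (-lam * p.1) < p.2 / (n : ℝ)} :=
      measurableSet_lt (by fun_prop) (by fun_prop)
    have h2 : MeasurableSet {p : ℝ × ℝ | p.2 ≤ (n : ℝ)} :=
      measurableSet_le (by fun_prop) measurable_const
    exact h1.inter h2
  have hInt : Integrable (Function.uncurry F) (ν.prod μs) := by
    refine Integrable.mono' (integrable_const 1) hFmeas.aestronglyMeasurable ?_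
    refine Filter.Eventually.of_forall ?_
    rintro ⟨x, s⟩
    rw [hFeq]
    dsimp only
    split_ifs with h
    · obtain ⟨h1, h2⟩ := h
      have h0 : 0 < s / n := (Real.exp_pos _).trans h1
      have hle1 : s / n ≤ 1 := by rw [div_le_one hn0]; exact h2
      have hnn : 0 ≤ 1 - s / n := by linarith
      rw [Real.norm_eq_abs, abs_of_nonneg (pow_nonneg hnn _)]
      calc (1 - s / n) ^ (n - 1) ≤ 1 ^ (n - 1) := pow_le_pow_left₀ hnn (by linarith) _
        _ = 1 := one_pow _
    · simp
  have hae : ∀ᵐ x ∂ν, 0 < x := by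
    rw [ae_iff]
    convert hpos using 2
    ext x
    simp
  have hL : ∀ᵐ x ∂ν, (∫ s, F x s ∂μs) = (1 - Real.exp (-lam * x)) ^ n := by
    filter_upwards [hae] with x hx
    set u := Real.exp (-lam * x) with hu
    have hu0 : 0 < u := Real.exp_pos _
    have hu1 : u < 1 := by
      rw [hu, Real.exp_lt_one_iff]
      nlinarith
    have hFind : ∀ s, F x s
        = Set.indicator (Set.Ioc ((n : ℝ) * u) (n : ℝ)) (fun s => (1 - s / n) ^ (n - 1)) s := by
      intro s
      rw [Set.indicator_apply, hF]
      have hiff : (Real.exp (-lam * x) < s / n ∧ s ≤ (n : ℝ)) ↔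
          s ∈ Set.Ioc ((n : ℝ) * u) (n : ℝ) := by
        rw [Set.mem_Ioc, ← hu]
        constructor
        · rintro ⟨ha, hb⟩
          exact ⟨by rw [mul_comm]; exact (lt_div_iff₀ hn0).mp ha, hb⟩
        · rintro ⟨ha, hb⟩
          refine ⟨?_, hb⟩
          rw [lt_div_iff₀ hn0, mul_comm]
          exact ha
      simp only [hiff]
    simp only [hFind, hμs]
    rw [MeasureTheory.integral_indicator measurableSet_Ioc,
      Measure.restrict_restrict measurableSet_Ioc,
      Set.inter_eq_self_of_subset_left (Set.Ioc_subset_Ioc_left (by positivity))]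
    have hle : (n : ℝ) * u ≤ (n : ℝ) := by nlinarith
    rw [← intervalIntegral.integral_of_le hle]
    have key : ∀ t ∈ Set.uIcc ((n : ℝ) * u) (n : ℝ),
        HasDerivAt (fun s : ℝ => -(1 - s / (n : ℝ)) ^ n) ((1 - t / (n : ℝ)) ^ (n - 1)) t := by
      intro t _
      have h1 : HasDerivAt (fun s : ℝ => 1 - s / (n : ℝ)) (-(1 / (n : ℝ))) t := by
        simpa using ((hasDerivAt_id t).div_const (n : ℝ)).const_sub 1
      have h2 := (h1.pow n).neg
      convert h2 using 1
      · rfl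
      · rfl
      · rfl
      field_simp
    rw [intervalIntegral.integral_eq_sub_of_hasDerivAt key
      (((continuous_const.sub (continuous_id.div_const _)).pow _).intervalIntegrable _ _)]
    have h9 : (n : ℝ) * (u / (n : ℝ)) = u := by field_simp
    rw [div_self hnne, sub_self, zero_pow (show n ≠ 0 by omega), mul_div_assoc, h9]
    ring
  have hR : ∀ᵐ s ∂μs, (∫ x, F x s ∂ν)
      = (1 - s / n) ^ (n - 1) * (ν {x | Real.exp (-lam * x) < s / n}).toReal := by
    rw [hμs]
    filter_upwards [ae_restrict_mem measurableSet_Ioc] with s hs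
    have hFind : ∀ x : ℝ, F x s
        = Set.indicator {x : ℝ | Real.exp (-lam * x) < s / n}
            (fun _ => (1 - s / (n : ℝ)) ^ (n - 1)) x := by
      intro x
      rw [Set.indicator_apply, hF]
      simp [Set.mem_setOf_eq, hs.2]
    simp only [hFind]
    rw [MeasureTheory.integral_indicator_const _
      (measurableSet_lt (by fun_prop) measurable_const)]
    rw [smul_eq_mul, mul_comm]; rfl
  calc ∫ x, (1 - Real.exp (-lam * x)) ^ n ∂ν
      = ∫ x, (∫ s, F x s ∂μs) ∂ν := (integral_congr_ae hL).symm
    _ = ∫ s, (∫ x, F x s ∂ν) ∂μs := MeasureTheory.integral_integral_swap hInt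
    _ = ∫ s in Set.Ioc (0 : ℝ) (n : ℝ),
          (1 - s / n) ^ (n - 1) * (ν {x | Real.exp (-lam * x) < s / n}).toReal :=
        integral_congr_ae hR

/-- Let `ζ₁` have law `ν` on `(0,∞)` (no mass at zero) with
`P(ζ₁ > y) ∼ c e^{−γy}` as `y → ∞`, let `λ > 0` and `a = γ/λ`.  If `X̃₁` is, conditionally on
`ζ₁`, geometric on `{1,2,…}` with parameter `e^{−λζ₁}`, i.e. `P(X̃₁ > k) = E[(1−e^{−λζ₁})^k]`,
then `P(X̃₁ > k) ∼ c Γ(1+a) k^{−a}` as `k → ∞`. -/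
theorem stmt_13
    (ν : Measure ℝ) [IsProbabilityMeasure ν] (c γ lam : ℝ)
    (hc : 0 < c) (hγ : 0 < γ) (hlam : 0 < lam)
    (hpos : ν (Set.Iic 0) = 0)
    (htail : Tendsto (fun y : ℝ => (ν {x | y < x}).toReal / (c * Real.exp (-γ * y)))
      atTop (nhds 1)) :
    Tendsto (fun k : ℕ =>
        (∫ x, (1 - Real.exp (-lam * x)) ^ k ∂ν) /
          (c * Real.Gamma (1 + γ / lam) * (k : ℝ) ^ (-(γ / lam))))
      atTop (nhds 1) := by
  set a : ℝ := γ / lam with ha_def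
  have ha : 0 < a := div_pos hγ hlam
  set G : ℝ → ℝ := fun s => (ν {x | Real.exp (-lam * x) < s}).toReal with hG_def
  have hGtail : Tendsto (fun s : ℝ => G s / (c * s ^ a)) (nhdsWithin 0 (Set.Ioi 0)) (nhds 1) :=
    aux_tail ν c γ lam hγ hlam htail
  have hGmono : Monotone G := by
    intro s t hst
    exact ENNReal.toReal_mono (measure_ne_top ν _)
      (measure_mono (fun x hx => lt_of_lt_of_le hx hst))
  have hGmeas : Measurable G := hGmono.measurable
  have hG0 : ∀ s, 0 ≤ G s := fun s => ENNReal.toReal_nonneg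
  have hG1 : ∀ s, G s ≤ 1 := by
    intro s
    have h1 : ν {x | Real.exp (-lam * x) < s} ≤ 1 := prob_le_one
    calc G s ≤ (1 : ENNReal).toReal := ENNReal.toReal_mono ENNReal.one_ne_top h1
      _ = 1 := by simp
  obtain ⟨δ, hδpos, hδ⟩ : ∃ δ > 0, ∀ s ∈ Set.Ioc (0 : ℝ) δ, G s ≤ 2 * c * s ^ a := by
    have h2 : ∀ᶠ s in nhdsWithin (0 : ℝ) (Set.Ioi 0), G s / (c * s ^ a) ≤ 2 := by
      filter_upwards [hGtail.eventually (eventually_le_nhds (by norm_num : (1 : ℝ) < 2))]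
        with s hs
      exact hs
    rw [eventually_iff, mem_nhdsGT_iff_exists_Ioc_subset] at h2
    obtain ⟨δ, hδ1, hδ2⟩ := h2
    refine ⟨δ, hδ1, fun s hs => ?_⟩
    have h3 := hδ2 hs
    have hcs : 0 < c * s ^ a := mul_pos hc (Real.rpow_pos_of_pos hs.1 a)
    calc G s ≤ 2 * (c * s ^ a) := (div_le_iff₀ hcs).mp h3
      _ = 2 * c * s ^ a := by ring
  set M : ℝ := max (2 * c) (δ⁻¹ ^ a) with hM_def
  have hM0 : 0 < M := lt_max_of_lt_left (by linarith)
  have hkey : ∀ k : ℕ, 1 ≤ k → ∀ s ∈ Set.Ioc (0 : ℝ) (k : ℝ),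
      (k : ℝ) ^ a * G (s / k) ≤ M * s ^ a := by
    intro k hk s hs
    have hk0 : (0 : ℝ) < k := by exact_mod_cast hk
    have hs0 : 0 < s := hs.1
    have hska : (s / k) ^ a = s ^ a / (k : ℝ) ^ a := Real.div_rpow hs0.le hk0.le a
    have hka0 : (0 : ℝ) < (k : ℝ) ^ a := Real.rpow_pos_of_pos hk0 a
    by_cases hcase : s / k ≤ δ
    · have h1 : G (s / k) ≤ 2 * c * (s / k) ^ a := hδ _ ⟨div_pos hs0 hk0, hcase⟩
      calc (k : ℝ) ^ a * G (s / k) ≤ (k : ℝ) ^ a * (2 * c * (s / k) ^ a) :=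
            mul_le_mul_of_nonneg_left h1 hka0.le
        _ = 2 * c * s ^ a := by
              rw [hska]
              field_simp
        _ ≤ M * s ^ a :=
            mul_le_mul_of_nonneg_right (le_max_left _ _) (by positivity)
    · push_neg at hcase
      have h0 : δ * (k : ℝ) < s := (lt_div_iff₀ hk0).mp hcase
      have hkδ : (k : ℝ) < s * δ⁻¹ := by
        rw [← div_eq_mul_inv]
        exact (lt_div_iff₀ hδpos).mpr (by linarith)
      have h1 : (k : ℝ) ^ a ≤ (s * δ⁻¹) ^ a := Real.rpow_le_rpow hk0.le hkδ.le ha.le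
      have h2 : (s * δ⁻¹) ^ a = s ^ a * δ⁻¹ ^ a := Real.mul_rpow hs0.le (by positivity)
      calc (k : ℝ) ^ a * G (s / k) ≤ (k : ℝ) ^ a * 1 :=
            mul_le_mul_of_nonneg_left (hG1 _) hka0.le
        _ = (k : ℝ) ^ a := mul_one _
        _ ≤ s ^ a * δ⁻¹ ^ a := by rw [← h2]; exact h1
        _ ≤ M * s ^ a := by
            rw [mul_comm]
            exact mul_le_mul_of_nonneg_right (le_max_right _ _) (by positivity)
  set F : ℕ → ℝ → ℝ := fun k s =>
    if s ≤ (k : ℝ) then (k : ℝ) ^ a * ((1 - s / k) ^ (k - 1) * G (s / k)) else 0 with hF_def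
  set bound : ℝ → ℝ := fun s => (M * Real.exp 1) * (s ^ a * Real.exp (-s)) with hbound_def
  have hFmeas : ∀ k : ℕ, AEStronglyMeasurable (F k) (volume.restrict (Set.Ioi (0 : ℝ))) := by
    intro k
    apply Measurable.aestronglyMeasurable
    rw [hF_def]
    refine Measurable.ite (measurableSet_le measurable_id measurable_const) ?_ measurable_const
    exact measurable_const.mul
      ((((measurable_id.div_const _).const_sub 1).pow_const _).mul
        (hGmeas.comp (measurable_id.div_const _)))
  have hboundInt : Integrable bound (volume.restrict (Set.Ioi (0 : ℝ))) := by
    have h1 : IntegrableOn (fun s : ℝ => s ^ a * Real.exp (-1 * s ^ (1 : ℝ))) (Set.Ioi 0) :=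
      integrableOn_rpow_mul_exp_neg_mul_rpow (by linarith) one_pos one_pos
    have h2 : IntegrableOn (fun s : ℝ => s ^ a * Real.exp (-s)) (Set.Ioi 0) := by
      refine h1.congr_fun (fun s hs => ?_) measurableSet_Ioi
      simp only [Real.rpow_one]
      ring_nf
    exact h2.const_mul _
  have h_bound : ∀ k : ℕ, ∀ᵐ s ∂(volume.restrict (Set.Ioi (0 : ℝ))), ‖F k s‖ ≤ bound s := by
    intro k
    filter_upwards [ae_restrict_mem measurableSet_Ioi] with s hs
    have hs0 : (0 : ℝ) < s := hs
    have hbound0 : 0 ≤ bound s := by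
      rw [hbound_def]
      positivity
    rcases Nat.eq_zero_or_pos k with hk | hk
    · subst hk
      have hns : ¬ (s ≤ ((0 : ℕ) : ℝ)) := by push_neg; exact_mod_cast hs0
      simp only [hF_def, hns, if_false]
      simpa using hbound0
    · have hk0 : (0 : ℝ) < k := by exact_mod_cast hk
      by_cases hsk : s ≤ (k : ℝ)
      · simp only [hF_def, hsk, if_true]
        have hsk1 : s / k ≤ 1 := by rw [div_le_one hk0]; exact hsk
        have hnn : 0 ≤ 1 - s / k := by linarith
        have hval0 : 0 ≤ (k : ℝ) ^ a * ((1 - s / k) ^ (k - 1) * G (s / k)) := by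
          have := hG0 (s / k)
          positivity
        rw [Real.norm_eq_abs, abs_of_nonneg hval0]
        have hexp : (1 - s / k) ^ (k - 1) ≤ Real.exp 1 * Real.exp (-s) := by
          have e1 : 1 - s / k ≤ Real.exp (-(s / k)) := by
            have := Real.add_one_le_exp (-(s / k)); linarith
          have e2 : (1 - s / k) ^ (k - 1) ≤ Real.exp (-(s / k)) ^ (k - 1) :=
            pow_le_pow_left₀ hnn e1 _
          have e3 : Real.exp (-(s / k)) ^ (k - 1) = Real.exp (((k : ℝ) - 1) * (-(s / k))) := by
            rw [← Real.exp_nat_mul]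
            congr 1
            have hc1 : ((k - 1 : ℕ) : ℝ) = (k : ℝ) - 1 := by
              rw [Nat.cast_sub hk]; simp
            rw [hc1]
          have e4 : ((k : ℝ) - 1) * (-(s / k)) ≤ 1 - s := by
            have he : ((k : ℝ) - 1) * (-(s / k)) = -s + s / k := by field_simp; ring
            rw [he]; linarith
          calc (1 - s / k) ^ (k - 1) ≤ Real.exp (((k : ℝ) - 1) * (-(s / k))) := by
                rw [← e3]; exact e2
            _ ≤ Real.exp (1 - s) := Real.exp_le_exp.mpr e4
            _ = Real.exp 1 * Real.exp (-s) := by rw [← Real.exp_add]; ring_nf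
        have hGpart : (k : ℝ) ^ a * G (s / k) ≤ M * s ^ a := hkey k hk s ⟨hs0, hsk⟩
        calc (k : ℝ) ^ a * ((1 - s / k) ^ (k - 1) * G (s / k))
            = ((k : ℝ) ^ a * G (s / k)) * (1 - s / k) ^ (k - 1) := by ring
          _ ≤ (M * s ^ a) * (Real.exp 1 * Real.exp (-s)) := by
              apply mul_le_mul hGpart hexp (pow_nonneg hnn _)
              positivity
          _ = bound s := by rw [hbound_def]; ring
      · simp only [hF_def, hsk, if_false]
        simpa using hbound0
  have h_lim : ∀ᵐ s ∂(volume.restrict (Set.Ioi (0 : ℝ))),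
      Tendsto (fun k => F k s) atTop (nhds (c * (Real.exp (-s) * s ^ a))) := by
    filter_upwards [ae_restrict_mem measurableSet_Ioi] with s hs
    have hs0 : (0 : ℝ) < s := hs
    have hsa0 : (0 : ℝ) < s ^ a := Real.rpow_pos_of_pos hs0 a
    have hks : Tendsto (fun k : ℕ => s / (k : ℝ)) atTop (nhdsWithin 0 (Set.Ioi 0)) := by
      rw [tendsto_nhdsWithin_iff]
      constructor
      · exact tendsto_const_div_atTop_nhds_zero_nat s
      · filter_upwards [eventually_ge_atTop 1] with k hk
        have hk0 : (0 : ℝ) < k := by exact_mod_cast hk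
        exact div_pos hs0 hk0
    have t1 : Tendsto (fun k : ℕ => (k : ℝ) ^ a * G (s / k)) atTop (nhds (c * s ^ a)) := by
      have h := (hGtail.comp hks).mul_const (c * s ^ a)
      rw [one_mul] at h
      refine h.congr' ?_
      filter_upwards [eventually_ge_atTop 1] with k hk
      have hk0 : (0 : ℝ) < k := by exact_mod_cast hk
      have hka0 : (0 : ℝ) < (k : ℝ) ^ a := Real.rpow_pos_of_pos hk0 a
      have hska : (s / k) ^ a = s ^ a / (k : ℝ) ^ a := Real.div_rpow hs0.le hk0.le a
      simp only [Function.comp_apply]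
      rw [hska]
      field_simp
    have t2 : Tendsto (fun k : ℕ => (1 - s / (k : ℝ)) ^ (k - 1)) atTop
        (nhds (Real.exp (-s))) := by
      have hb : Tendsto (fun k : ℕ => 1 - s / (k : ℝ)) atTop (nhds 1) := by
        have hb0 := (tendsto_const_div_atTop_nhds_zero_nat s).const_sub 1
        simpa using hb0
      have h1 := Real.tendsto_one_add_div_pow_exp (-s)
      have h3 := h1.mul (hb.inv₀ one_ne_zero)
      rw [inv_one, mul_one] at h3
      refine h3.congr' ?_
      filter_upwards [tendsto_natCast_atTop_atTop.eventually_gt_atTop s] with k hk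
      have hk0 : (0 : ℝ) < k := lt_trans hs0 hk
      have hkn : 1 ≤ k := by
        by_contra hcon
        push_neg at hcon
        interval_cases k
        simp at hk0
      have hne : (0 : ℝ) < 1 - s / k := by
        rw [sub_pos, div_lt_one hk0]; exact hk
      have harg : 1 + (-s) / (k : ℝ) = 1 - s / k := by ring
      rw [harg]
      have hpow : (1 - s / (k : ℝ)) ^ k = (1 - s / (k : ℝ)) ^ (k - 1) * (1 - s / k) := by
        rw [← pow_succ]
        congr 1
        omega
      rw [hpow, mul_assoc, mul_inv_cancel₀ (ne_of_gt hne), mul_one]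
    have tmul := t1.mul t2
    have hrw : c * s ^ a * Real.exp (-s) = c * (Real.exp (-s) * s ^ a) := by ring
    rw [hrw] at tmul
    refine tmul.congr' ?_
    filter_upwards [tendsto_natCast_atTop_atTop.eventually_ge_atTop s] with k hk
    have hsk : s ≤ (k : ℝ) := hk
    simp only [hF_def, hsk, if_true]
    ring
  have hDCT := MeasureTheory.tendsto_integral_of_dominated_convergence bound hFmeas hboundInt
    h_bound h_lim
  have hval : (∫ s in Set.Ioi (0 : ℝ), c * (Real.exp (-s) * s ^ a)) = c * Real.Gamma (1 + a) := by
    rw [MeasureTheory.integral_const_mul]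
    congr 1
    rw [Real.Gamma_eq_integral (by linarith : (0 : ℝ) < 1 + a)]
    simp only [add_sub_cancel_left]
  rw [hval] at hDCT
  have hFk : ∀ k : ℕ, 1 ≤ k → (∫ s in Set.Ioi (0 : ℝ), F k s)
      = (k : ℝ) ^ a * ∫ x, (1 - Real.exp (-lam * x)) ^ k ∂ν := by
    intro k hk
    have hind : F k = Set.indicator (Set.Iic (k : ℝ))
        (fun s => (k : ℝ) ^ a * ((1 - s / k) ^ (k - 1) * G (s / k))) := by
      ext s
      rw [Set.indicator_apply, hF_def]
      simp [Set.mem_Iic]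
    rw [hind, MeasureTheory.integral_indicator measurableSet_Iic,
      Measure.restrict_restrict measurableSet_Iic]
    have hinter : Set.Iic (k : ℝ) ∩ Set.Ioi 0 = Set.Ioc 0 (k : ℝ) := by
      ext t
      simp only [Set.mem_inter_iff, Set.mem_Iic, Set.mem_Ioi, Set.mem_Ioc]
      tauto
    rw [hinter, MeasureTheory.integral_const_mul]
    congr 1
    rw [aux_key ν lam hlam hpos k hk]
  have hGamma_pos : 0 < Real.Gamma (1 + a) := Real.Gamma_pos_of_pos (by linarith)
  have hLpos : 0 < c * Real.Gamma (1 + a) := mul_pos hc hGamma_pos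
  have hdiv := hDCT.div_const (c * Real.Gamma (1 + a))
  rw [div_self (ne_of_gt hLpos)] at hdiv
  refine hdiv.congr' ?_
  filter_upwards [eventually_ge_atTop 1] with k hk
  have hk0 : (0 : ℝ) < k := by exact_mod_cast hk
  have hka0 : (0 : ℝ) < (k : ℝ) ^ a := Real.rpow_pos_of_pos hk0 a
  rw [hFk k hk, Real.rpow_neg hk0.le]
  field_simp
end

section
/- Consider a Pólya urn that initially contains M ≥ 1 balls, all of different colors: at each step a ball is drawn uniformly at random from the urn and returned together with one additional ball of the same color, and this is repeated until the urn contains N ≥ M balls. If two distinct balls are then chosen uniformly at random from the urn, the probability that they have the same color is at most 2/(M+1). Equivalently: let (n₁(t), …, n_M(t)) be the Markov chain started from (1, …, 1) in which at each step coordinate i is increased by 1 with probability n_i(t)/(n₁(t)+⋯+n_M(t)); after N − M steps, E[ Σ_{i=1}^M n_i (n_i − 1) ] / (N(N−1)) ≤ 2/(M+1). -/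
open MeasureTheory Filter

lemma aux_integral_eq_sum {Ω : Type*} [MeasurableSpace Ω]
    {α : Type*} [MeasurableSpace α] [MeasurableSingletonClass α]
    (μ : Measure Ω) [IsProbabilityMeasure μ]
    (X : Ω → α) (hX : Measurable X) (V : Finset α) (hV : ∀ᵐ ω ∂μ, X ω ∈ V) (g : α → ℝ) :
    ∫ ω, g (X ω) ∂μ = ∑ v ∈ V, g v * (μ {ω | X ω = v}).toReal := by
  classical
  have hms : ∀ v : α, MeasurableSet {ω | X ω = v} := fun v => hX (measurableSet_singleton v)
  have h1 : ∫ ω, g (X ω) ∂μ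
      = ∫ ω, ∑ v ∈ V, Set.indicator {ω | X ω = v} (fun _ => g v) ω ∂μ := by
    refine integral_congr_ae ?_
    filter_upwards [hV] with ω hω
    have : ∀ v ∈ V, Set.indicator {ω | X ω = v} (fun _ => g v) ω
        = if X ω = v then g v else 0 := by
      intro v _; simp [Set.indicator_apply, Set.mem_setOf_eq]
    rw [Finset.sum_congr rfl this]
    rw [Finset.sum_ite_eq V (X ω) g, if_pos hω]
  rw [h1, integral_finset_sum]
  · refine Finset.sum_congr rfl fun v _ => ?_
    rw [integral_indicator_const (g v) (hms v), smul_eq_mul, mul_comm]; rfl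
  · exact fun v _ => (integrable_const (g v)).indicator (hms v)

/-- Pólya urn: let `(n₁(t),…,n_M(t))` be the Markov chain started from
`(1,…,1)` in which at each step coordinate `i` is increased by `1` with probability
`n_i(t)/(n₁(t)+⋯+n_M(t))`.  Then after `N − M` steps (so the urn contains `N ≥ M ≥ 1` balls),
`E[Σ_{i=1}^M n_i(n_i − 1)] / (N(N−1)) ≤ 2/(M+1)`; i.e. the probability that two balls drawn
uniformly at random (without replacement) from the urn share a color is at most `2/(M+1)`. -/
theorem stmt_15
    {Ω : Type*} [MeasurableSpace Ω] (μ : Measure Ω) [IsProbabilityMeasure μ]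
    (M N : ℕ) (hM : 1 ≤ M) (hMN : M ≤ N)
    (n : ℕ → Ω → Fin M → ℕ) (hmeas : ∀ t, Measurable (n t))
    (h0 : ∀ᵐ ω ∂μ, n 0 ω = fun _ => 1)
    (hstep : ∀ t ω, ∃ i, n (t + 1) ω = Function.update (n t ω) i (n t ω i + 1))
    (htrans : ∀ t (v : Fin M → ℕ) (i : Fin M),
      μ {ω | n t ω = v ∧ n (t + 1) ω = Function.update v i (v i + 1)} *
          ((∑ j, v j : ℕ) : ENNReal) =
        μ {ω | n t ω = v} * ((v i : ℕ) : ENNReal)) :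
    (∫ ω, ∑ i, (n (N - M) ω i : ℝ) * ((n (N - M) ω i : ℝ) - 1) ∂μ) /
        ((N : ℝ) * ((N : ℝ) - 1)) ≤ 2 / ((M : ℝ) + 1) := by
  classical
  -- the a.s. invariant
  have hae : ∀ᵐ ω ∂μ, ∀ t, (∀ i, 1 ≤ n t ω i) ∧ ∑ i, n t ω i = M + t := by
    filter_upwards [h0] with ω hω t
    induction t with
    | zero =>
      refine ⟨fun i => by simp [hω], ?_⟩
      simp [hω]
    | succ t ih =>
      obtain ⟨i, hi⟩ := hstep t ω
      constructor
      · intro j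
        rcases eq_or_ne j i with rfl | hj
        · simp [hi]
        · rw [hi, Function.update_of_ne hj]; exact ih.1 j
      · rw [hi, Finset.sum_update_of_mem (Finset.mem_univ i)]
        have h2 := Finset.sum_eq_add_sum_sdiff_singleton_of_mem (Finset.mem_univ i) (fun j => n t ω j)
        omega
  set G : (Fin M → ℕ) → ℝ := fun v => ∑ i, (v i : ℝ) * ((v i : ℝ) - 1) with hGdef
  set F : ℕ → ℝ := fun t => ∫ ω, ∑ i, (n t ω i : ℝ) * ((n t ω i : ℝ) - 1) ∂μ with hFdef
  set V : ℕ → Finset (Fin M → ℕ) := fun t =>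
    (Fintype.piFinset fun _ : Fin M => Finset.range (M + t + 1)).filter
      (fun v => (∀ i, 1 ≤ v i) ∧ ∑ i, v i = M + t) with hVdef
  set Br : ℕ → (Fin M → ℕ) → ℝ := fun t v => (μ {ω | n t ω = v}).toReal with hBrdef
  have hVmem : ∀ t, ∀ᵐ ω ∂μ, n t ω ∈ V t := by
    intro t
    filter_upwards [hae] with ω hω
    obtain ⟨h1, h2⟩ := hω t
    refine Finset.mem_filter.mpr ⟨?_, h1, h2⟩
    refine Fintype.mem_piFinset.mpr fun i => Finset.mem_range.mpr ?_
    have : n t ω i ≤ ∑ j, n t ω j :=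
      Finset.single_le_sum (fun j _ => Nat.zero_le _) (Finset.mem_univ i)
    omega
  have hVprop : ∀ t, ∀ v ∈ V t, (∀ i, 1 ≤ v i) ∧ ∑ i, v i = M + t :=
    fun t v hv => (Finset.mem_filter.mp hv).2
  have hFt : ∀ t, F t = ∑ v ∈ V t, G v * Br t v := by
    intro t
    exact aux_integral_eq_sum μ (n t) (hmeas t) (V t) (hVmem t) G
  have hsum1 : ∀ t, ∑ v ∈ V t, Br t v = 1 := by
    intro t
    have h := aux_integral_eq_sum μ (n t) (hmeas t) (V t) (hVmem t) (fun _ => (1 : ℝ))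
    simp only [integral_const, measure_univ, one_mul, ENNReal.toReal_one, probReal_univ, smul_eq_mul,
      mul_one] at h
    exact h.symm
  have F0 : F 0 = 0 := by
    have h : ∀ᵐ ω ∂μ, (∑ i, (n 0 ω i : ℝ) * ((n 0 ω i : ℝ) - 1)) = (0 : ℝ) := by
      filter_upwards [h0] with ω hω
      simp [hω]
    calc F 0 = ∫ _ω, (0 : ℝ) ∂μ := integral_congr_ae h
    _ = 0 := integral_zero _ _
  -- increment of G
  have hGadd : ∀ (v : Fin M → ℕ) (i : Fin M),
      G (Function.update v i (v i + 1)) = G v + 2 * (v i : ℝ) := by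
    intro v i
    have e1 := Finset.sum_eq_add_sum_sdiff_singleton_of_mem (Finset.mem_univ i)
      (fun j => ((Function.update v i (v i + 1) j : ℕ) : ℝ)
        * (((Function.update v i (v i + 1) j : ℕ) : ℝ) - 1))
    have e2 := Finset.sum_eq_add_sum_sdiff_singleton_of_mem (Finset.mem_univ i)
      (fun j => ((v j : ℕ) : ℝ) * (((v j : ℕ) : ℝ) - 1))
    have e3 : ∑ j ∈ Finset.univ \ {i},
        ((Function.update v i (v i + 1) j : ℕ) : ℝ)
          * (((Function.update v i (v i + 1) j : ℕ) : ℝ) - 1)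
        = ∑ j ∈ Finset.univ \ {i}, ((v j : ℕ) : ℝ) * (((v j : ℕ) : ℝ) - 1) := by
      refine Finset.sum_congr rfl fun j hj => ?_
      have hji : j ≠ i := by
        have := (Finset.mem_sdiff.mp hj).2
        simpa using this
      rw [Function.update_of_ne hji]
    simp only [hGdef]
    rw [e1, e2, e3, Function.update_self]
    push_cast
    ring
  -- the recursion
  have hrec : ∀ t, F (t + 1) * ((M : ℝ) + t) = F t * ((M : ℝ) + t + 2) + 2 * ((M : ℝ) + t) := by
    intro t
    have hpair : ∀ᵐ ω ∂μ, (n t ω, n (t + 1) ω) ∈ V t ×ˢ V (t + 1) := by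
      filter_upwards [hVmem t, hVmem (t + 1)] with ω h1 h2
      exact Finset.mem_product.mpr ⟨h1, h2⟩
    have hXm : Measurable fun ω => (n t ω, n (t + 1) ω) := (hmeas t).prodMk (hmeas (t + 1))
    have hF1 : F (t + 1) = ∑ p ∈ V t ×ˢ V (t + 1),
        G p.2 * (μ {ω | (n t ω, n (t + 1) ω) = p}).toReal :=
      aux_integral_eq_sum μ _ hXm _ hpair fun p => G p.2
    -- reduce the inner sum to a sum over coordinates
    have inner : ∀ v ∈ V t,
        ∑ w ∈ V (t + 1), G w * (μ {ω | (n t ω, n (t + 1) ω) = (v, w)}).toReal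
        = ∑ i : Fin M, G (Function.update v i (v i + 1))
            * (μ {ω | (n t ω, n (t + 1) ω) = (v, Function.update v i (v i + 1))}).toReal := by
      intro v hv
      obtain ⟨hv1, hv2⟩ := hVprop t v hv
      have hinj : ∀ i ∈ (Finset.univ : Finset (Fin M)), ∀ j ∈ (Finset.univ : Finset (Fin M)),
          Function.update v i (v i + 1) = Function.update v j (v j + 1) → i = j := by
        intro i _ j _ h
        by_contra hij
        have h1 := congrFun h i
        rw [Function.update_self, Function.update_of_ne hij] at h1
        omega
      have himg : (Finset.univ.image fun i => Function.update v i (v i + 1)) ⊆ V (t + 1) := by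
        intro w hw
        obtain ⟨i, _, rfl⟩ := Finset.mem_image.mp hw
        have hsum : ∑ j, Function.update v i (v i + 1) j = M + t + 1 := by
          rw [Finset.sum_update_of_mem (Finset.mem_univ i)]
          have h2 := Finset.sum_eq_add_sum_sdiff_singleton_of_mem (Finset.mem_univ i) v
          omega
        refine Finset.mem_filter.mpr ⟨?_, ?_, by omega⟩
        · refine Fintype.mem_piFinset.mpr fun j => Finset.mem_range.mpr ?_
          have : Function.update v i (v i + 1) j ≤ ∑ k, Function.update v i (v i + 1) k :=
            Finset.single_le_sum (fun k _ => Nat.zero_le _) (Finset.mem_univ j)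
          omega
        · intro j
          rcases eq_or_ne j i with rfl | hj
          · simp
          · rw [Function.update_of_ne hj]; exact hv1 j
      have hzero : ∀ w ∈ V (t + 1),
          w ∉ (Finset.univ.image fun i => Function.update v i (v i + 1)) →
          G w * (μ {ω | (n t ω, n (t + 1) ω) = (v, w)}).toReal = 0 := by
        intro w _ hnw
        have hempty : {ω | (n t ω, n (t + 1) ω) = (v, w)} = ∅ := by
          ext ω
          simp only [Set.mem_setOf_eq, Set.mem_empty_iff_false, iff_false, Prod.mk.injEq, not_and]
          intro h1 h2
          obtain ⟨i, hi⟩ := hstep t ω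
          exact hnw (Finset.mem_image.mpr ⟨i, Finset.mem_univ i, by rw [← h2, hi, h1]⟩)
        rw [hempty]
        simp
      rw [← Finset.sum_subset himg hzero, Finset.sum_image hinj]
    -- real form of the transition identity
    have htr : ∀ v ∈ V t, ∀ i : Fin M,
        (μ {ω | (n t ω, n (t + 1) ω) = (v, Function.update v i (v i + 1))}).toReal
            * ((M : ℝ) + t)
          = Br t v * (v i : ℝ) := by
      intro v hv i
      obtain ⟨hv1, hv2⟩ := hVprop t v hv
      have hset : {ω | (n t ω, n (t + 1) ω) = (v, Function.update v i (v i + 1))}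
          = {ω | n t ω = v ∧ n (t + 1) ω = Function.update v i (v i + 1)} := by
        ext ω
        simp [Prod.ext_iff]
      have h := htrans t v i
      rw [hv2] at h
      have h2 := congrArg ENNReal.toReal h
      rw [ENNReal.toReal_mul, ENNReal.toReal_mul, ENNReal.toReal_natCast, ENNReal.toReal_natCast] at h2
      rw [hset]
      simp only [hBrdef]
      push_cast at h2 ⊢
      linarith
    -- assemble
    have main : F (t + 1) * ((M : ℝ) + t)
        = ∑ v ∈ V t, Br t v * (G v * ((M : ℝ) + t + 2) + 2 * ((M : ℝ) + t)) := by
      rw [hF1, Finset.sum_product, Finset.sum_congr rfl inner, Finset.sum_mul]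
      refine Finset.sum_congr rfl fun v hv => ?_
      obtain ⟨hv1, hv2⟩ := hVprop t v hv
      have s1 : ∑ i, (v i : ℝ) = (M : ℝ) + t := by
        have h' : ((∑ i, v i : ℕ) : ℝ) = ((M + t : ℕ) : ℝ) := by rw [hv2]
        push_cast at h'
        exact h'
      have s2 : ∑ i, ((v i : ℝ)) ^ 2 = G v + ((M : ℝ) + t) := by
        have h : ∀ i : Fin M, (v i : ℝ) ^ 2 = (v i : ℝ) * ((v i : ℝ) - 1) + (v i : ℝ) :=
          fun i => by ring
        rw [Finset.sum_congr rfl fun i _ => h i, Finset.sum_add_distrib, s1]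
      rw [Finset.sum_mul]
      calc ∑ i : Fin M, G (Function.update v i (v i + 1))
              * (μ {ω | (n t ω, n (t + 1) ω) = (v, Function.update v i (v i + 1))}).toReal
              * ((M : ℝ) + t)
          = ∑ i : Fin M, (G v + 2 * (v i : ℝ)) * (Br t v * (v i : ℝ)) := by
            refine Finset.sum_congr rfl fun i _ => ?_
            rw [mul_assoc, htr v hv i, hGadd]
        _ = ∑ i : Fin M, (Br t v * (G v * (v i : ℝ)) + Br t v * (2 * (v i : ℝ) ^ 2)) := by
            refine Finset.sum_congr rfl fun i _ => ?_
            ring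
        _ = Br t v * (G v * ((M : ℝ) + t + 2) + 2 * ((M : ℝ) + t)) := by
            rw [Finset.sum_add_distrib, ← Finset.mul_sum, ← Finset.mul_sum, ← Finset.mul_sum,
              ← Finset.mul_sum, s1, s2]
            ring
    rw [main]
    have h : ∀ v ∈ V t, Br t v * (G v * ((M : ℝ) + t + 2) + 2 * ((M : ℝ) + t))
        = G v * Br t v * ((M : ℝ) + t + 2) + 2 * ((M : ℝ) + t) * Br t v := fun v _ => by ring
    rw [Finset.sum_congr rfl h, Finset.sum_add_distrib, ← Finset.sum_mul, ← Finset.mul_sum,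
      ← hFt t, hsum1 t]
    ring
  -- closed form
  have hclosed : ∀ t, ((M : ℝ) + 1) * F t = 2 * ((M : ℝ) + t) * t := by
    intro t
    induction t with
    | zero => simp [F0]
    | succ t ih =>
      have h := hrec t
      have hM1 : (1 : ℝ) ≤ (M : ℝ) := by exact_mod_cast hM
      have ht0 : (0 : ℝ) ≤ (t : ℝ) := Nat.cast_nonneg t
      have hMt : ((M : ℝ) + t) ≠ 0 := by linarith
      have key : ((M : ℝ) + 1) * F (t + 1) * ((M : ℝ) + t)
          = 2 * ((M : ℝ) + t + 1) * ((t : ℝ) + 1) * ((M : ℝ) + t) := by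
        calc ((M : ℝ) + 1) * F (t + 1) * ((M : ℝ) + t)
            = ((M : ℝ) + 1) * (F (t + 1) * ((M : ℝ) + t)) := by ring
          _ = ((M : ℝ) + 1) * (F t * ((M : ℝ) + t + 2) + 2 * ((M : ℝ) + t)) := by rw [h]
          _ = ((M : ℝ) + 1) * F t * ((M : ℝ) + t + 2) + 2 * ((M : ℝ) + t) * ((M : ℝ) + 1) := by
              ring
          _ = 2 * ((M : ℝ) + t) * t * ((M : ℝ) + t + 2) + 2 * ((M : ℝ) + t) * ((M : ℝ) + 1) := by
              rw [ih]
          _ = 2 * ((M : ℝ) + t + 1) * ((t : ℝ) + 1) * ((M : ℝ) + t) := by ring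
      have h2 := mul_right_cancel₀ hMt key
      push_cast
      linarith
  -- finish
  have hgoal : (∫ ω, ∑ i, (n (N - M) ω i : ℝ) * ((n (N - M) ω i : ℝ) - 1) ∂μ) = F (N - M) :=
    rfl
  rw [hgoal]
  have hF := hclosed (N - M)
  have hcast : ((N - M : ℕ) : ℝ) = (N : ℝ) - (M : ℝ) := by
    rw [Nat.cast_sub hMN]
  rw [hcast] at hF
  have hM1 : (0 : ℝ) < (M : ℝ) + 1 := by positivity
  have hMR : (1 : ℝ) ≤ (M : ℝ) := by exact_mod_cast hM
  have hNR : (M : ℝ) ≤ (N : ℝ) := by exact_mod_cast hMN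
  rcases eq_or_lt_of_le hMN with heq | hltn
  · have h0' : N - M = 0 := by omega
    rw [h0', F0, zero_div]
    positivity
  · have hN2R : (2 : ℝ) ≤ (N : ℝ) := by exact_mod_cast (by omega : 2 ≤ N)
    have hMNR : (M : ℝ) + 1 ≤ (N : ℝ) := by exact_mod_cast hltn
    have hD : (0 : ℝ) < (N : ℝ) * ((N : ℝ) - 1) := by nlinarith
    rw [div_le_div_iff₀ hD hM1]
    nlinarith [hF, mul_nonneg (by linarith : (0:ℝ) ≤ (N:ℝ)) (by linarith : (0:ℝ) ≤ (M:ℝ) - 1)]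
end

section
/- Suppose η and η̂ are measures on (0,∞) satisfying ∫_0^∞ (1 ∧ κ²) η(dκ) < ∞ and ∫_0^∞ (1 ∧ κ²) η̂(dκ) < ∞, and suppose that for every y ∈ (0,1), ∫_0^∞ (1/κ) (y/(1−y))² exp( − y/(κ(1−y)) ) η(dκ) = ∫_0^∞ (1/κ) (y/(1−y))² exp( − y/(κ(1−y)) ) η̂(dκ). Then η = η̂. -/
open MeasureTheory Filter

namespace Stmt17

noncomputable def fden (κ : ℝ) : ENNReal := ENNReal.ofReal (κ⁻¹ * Real.exp (-κ⁻¹))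

noncomputable def F (κ : ℝ) : ℝ := Real.exp (-κ⁻¹)

lemma fden_measurable : Measurable fden :=
  (measurable_inv.mul (Real.measurable_exp.comp measurable_inv.neg)).ennreal_ofReal

lemma F_measurable : Measurable F := Real.measurable_exp.comp measurable_inv.neg

lemma F_injective : Function.Injective F :=
  Real.exp_injective.comp (neg_injective.comp inv_injective)

lemma cube_le_exp {x : ℝ} (hx : 0 ≤ x) : x ^ 3 ≤ 27 * Real.exp x := by
  have h1 : x / 3 ≤ Real.exp (x / 3) := by linarith [Real.add_one_le_exp (x / 3)]
  have h2 : (x / 3) ^ 3 ≤ Real.exp (x / 3) ^ 3 := pow_le_pow_left₀ (by positivity) h1 3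
  have h3 : Real.exp (x / 3) ^ 3 = Real.exp x := by
    rw [← Real.exp_nat_mul]; congr 1; push_cast; ring
  nlinarith [h2, h3]

lemma fden_le (κ : ℝ) : fden κ ≤ ENNReal.ofReal 27 * ENNReal.ofReal (min 1 (κ ^ 2)) := by
  rw [← ENNReal.ofReal_mul (by norm_num)]
  apply ENNReal.ofReal_le_ofReal
  rcases le_or_gt κ 0 with hκ | hκ
  · have h0 : κ⁻¹ * Real.exp (-κ⁻¹) ≤ 0 :=
      mul_nonpos_of_nonpos_of_nonneg (inv_nonpos.mpr hκ) (Real.exp_pos _).le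
    have h2 : 0 ≤ min 1 (κ ^ 2) := le_min zero_le_one (sq_nonneg κ)
    nlinarith
  rcases le_or_gt 1 κ with h1 | h1
  · have hmin : min 1 (κ ^ 2) = 1 := min_eq_left (by nlinarith)
    rw [hmin]
    have hi : κ⁻¹ ≤ 1 := inv_le_one_of_one_le₀ h1
    have hinn : 0 ≤ κ⁻¹ := inv_nonneg.mpr (by linarith)
    have he : Real.exp (-κ⁻¹) ≤ 1 := Real.exp_le_one_iff.mpr (by linarith)
    nlinarith [Real.exp_pos (-κ⁻¹)]
  · have hmin : min 1 (κ ^ 2) = κ ^ 2 := min_eq_right (by nlinarith)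
    rw [hmin]
    have hx : 0 < κ⁻¹ := inv_pos.mpr hκ
    have key : κ⁻¹ ^ 3 ≤ 27 * Real.exp κ⁻¹ := cube_le_exp hx.le
    have hexp : 0 < Real.exp κ⁻¹ := Real.exp_pos _
    rw [Real.exp_neg, ← div_eq_mul_inv, div_le_iff₀ hexp]
    calc κ⁻¹ = κ⁻¹ ^ 3 * κ ^ 2 := by field_simp
      _ ≤ 27 * Real.exp κ⁻¹ * κ ^ 2 := mul_le_mul_of_nonneg_right key (sq_nonneg κ)
      _ = 27 * κ ^ 2 * Real.exp κ⁻¹ := by ring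

lemma nu_finite (η : Measure ℝ)
    (hint : (∫⁻ κ, ENNReal.ofReal (min 1 (κ ^ 2)) ∂η) < ⊤) :
    IsFiniteMeasure (η.withDensity fden) := by
  constructor
  rw [withDensity_apply _ MeasurableSet.univ, setLIntegral_univ]
  calc (∫⁻ κ, fden κ ∂η)
      ≤ ∫⁻ κ, ENNReal.ofReal 27 * ENNReal.ofReal (min 1 (κ ^ 2)) ∂η :=
        lintegral_mono fden_le
    _ = ENNReal.ofReal 27 * ∫⁻ κ, ENNReal.ofReal (min 1 (κ ^ 2)) ∂η := by
        rw [lintegral_const_mul]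
        measurability
    _ < ⊤ := ENNReal.mul_lt_top ENNReal.ofReal_lt_top hint

lemma sigma_ae (η : Measure ℝ) (hη : η (Set.Ioi (0 : ℝ))ᶜ = 0) :
    ∀ᵐ x ∂((η.withDensity fden).map F), x ∈ Set.Icc (0:ℝ) 1 := by
  rw [ae_iff]
  have h1 : {x : ℝ | ¬ x ∈ Set.Icc (0:ℝ) 1} = (Set.Icc (0:ℝ) 1)ᶜ := rfl
  rw [h1, Measure.map_apply F_measurable measurableSet_Icc.compl]
  have hsub : F ⁻¹' (Set.Icc (0:ℝ) 1)ᶜ ⊆ (Set.Ioi (0:ℝ))ᶜ := by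
    intro κ hκ
    simp only [Set.mem_preimage, Set.mem_compl_iff, Set.mem_Icc, not_and_or, not_le] at hκ
    simp only [Set.mem_compl_iff, Set.mem_Ioi, not_lt]
    by_contra h
    push_neg at h
    rcases hκ with h2 | h2
    · exact absurd h2 (not_lt.mpr (Real.exp_pos _).le)
    · have : Real.exp (-κ⁻¹) ≤ 1 :=
        Real.exp_le_one_iff.mpr (by simp [inv_nonneg.mpr h.le])
      exact absurd h2 (not_lt.mpr this)
  refine le_antisymm ?_ (zero_le)
  calc (η.withDensity fden) (F ⁻¹' (Set.Icc (0:ℝ) 1)ᶜ)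
      ≤ (η.withDensity fden) (Set.Ioi (0:ℝ))ᶜ := measure_mono hsub
    _ = ∫⁻ κ in (Set.Ioi (0:ℝ))ᶜ, fden κ ∂η :=
        withDensity_apply _ measurableSet_Ioi.compl
    _ = 0 := setLIntegral_measure_zero _ _ hη

/-- equality of `∫ κ⁻¹ e^{-t/κ}` for all `t > 0` from the hypothesis. -/
lemma heq' (η η' : Measure ℝ)
    (heq : ∀ y ∈ Set.Ioo (0 : ℝ) 1,
      (∫⁻ κ, ENNReal.ofReal (κ⁻¹ * (y / (1 - y)) ^ 2 *
        Real.exp (-(y / (κ * (1 - y))))) ∂η) =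
      ∫⁻ κ, ENNReal.ofReal (κ⁻¹ * (y / (1 - y)) ^ 2 *
        Real.exp (-(y / (κ * (1 - y))))) ∂η')
    {t : ℝ} (ht : 0 < t) :
    (∫⁻ κ, ENNReal.ofReal (κ⁻¹ * Real.exp (-(t / κ))) ∂η) =
      ∫⁻ κ, ENNReal.ofReal (κ⁻¹ * Real.exp (-(t / κ))) ∂η' := by
  have h1t : (0:ℝ) < 1 + t := by linarith
  have hy : t / (1 + t) ∈ Set.Ioo (0:ℝ) 1 :=
    ⟨div_pos ht h1t, (div_lt_one h1t).mpr (by linarith)⟩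
  have H := heq _ hy
  have h1y : 1 - t / (1 + t) = (1 + t)⁻¹ := by field_simp; ring
  have hyd : t / (1 + t) / (1 - t / (1 + t)) = t := by
    rw [h1y]; field_simp
  have hκd : ∀ κ : ℝ, t / (1 + t) / (κ * (1 - t / (1 + t))) = t / κ := by
    intro κ
    rcases eq_or_ne κ 0 with h | h
    · simp [h]
    · rw [h1y]; field_simp
  simp only [hyd, hκd] at H
  have e : ∀ κ : ℝ, ENNReal.ofReal (κ⁻¹ * t ^ 2 * Real.exp (-(t / κ))) =
      ENNReal.ofReal (t ^ 2) * ENNReal.ofReal (κ⁻¹ * Real.exp (-(t / κ))) := by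
    intro κ
    rw [← ENNReal.ofReal_mul (sq_nonneg t)]
    congr 1; ring
  have meas : Measurable fun κ : ℝ => ENNReal.ofReal (κ⁻¹ * Real.exp (-(t / κ))) :=
    (measurable_inv.mul (Real.measurable_exp.comp
      (measurable_const.div measurable_id).neg)).ennreal_ofReal
  simp only [e] at H
  rw [lintegral_const_mul _ meas, lintegral_const_mul _ meas] at H
  have ht2 : ENNReal.ofReal (t ^ 2) ≠ 0 := by
    simp [ENNReal.ofReal_eq_zero, not_le]; positivity
  exact (ENNReal.mul_right_inj ht2 ENNReal.ofReal_ne_top).mp H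

lemma moment_chain (η : Measure ℝ) (n : ℕ) :
    (∫⁻ x, ENNReal.ofReal (x ^ n) ∂((η.withDensity fden).map F)) =
      ∫⁻ κ, ENNReal.ofReal (κ⁻¹ * Real.exp (-(((n : ℝ) + 1) / κ))) ∂η := by
  have measg : Measurable fun x : ℝ => ENNReal.ofReal (x ^ n) := (measurable_id.pow_const n).ennreal_ofReal
  have measgF : Measurable fun a : ℝ => ENNReal.ofReal (F a ^ n) := measg.comp F_measurable
  rw [lintegral_map measg F_measurable,
    lintegral_withDensity_eq_lintegral_mul _ fden_measurable measgF]
  apply lintegral_congr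
  intro κ
  simp only [Pi.mul_apply, Function.comp_apply, F, fden]
  rcases le_or_gt κ 0 with hκ | hκ
  · have h0 : κ⁻¹ * Real.exp (-κ⁻¹) ≤ 0 :=
      mul_nonpos_of_nonpos_of_nonneg (inv_nonpos.mpr hκ) (Real.exp_pos _).le
    have h1 : κ⁻¹ * Real.exp (-(((n : ℝ) + 1) / κ)) ≤ 0 :=
      mul_nonpos_of_nonpos_of_nonneg (inv_nonpos.mpr hκ) (Real.exp_pos _).le
    rw [ENNReal.ofReal_eq_zero.mpr h0, ENNReal.ofReal_eq_zero.mpr h1, zero_mul]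
  · have hnn : 0 ≤ κ⁻¹ * Real.exp (-κ⁻¹) :=
      mul_nonneg (inv_nonneg.mpr hκ.le) (Real.exp_pos _).le
    rw [← ENNReal.ofReal_mul hnn]
    congr 1
    rw [← Real.exp_nat_mul, mul_assoc, ← Real.exp_add]
    have hexp : -κ⁻¹ + (n : ℝ) * -κ⁻¹ = -(((n : ℝ) + 1) / κ) := by
      field_simp
      ring
    rw [hexp]

lemma integrable_of_continuous (σ : Measure ℝ) [IsFiniteMeasure σ]
    (hs : ∀ᵐ x ∂σ, x ∈ Set.Icc (0:ℝ) 1) {g : ℝ → ℝ} (hg : Continuous g) :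
    Integrable g σ := by
  obtain ⟨C, hC⟩ :=
    (isCompact_Icc (a := (0:ℝ)) (b := 1)).exists_bound_of_continuousOn hg.continuousOn
  refine Integrable.mono' (integrable_const C) hg.aestronglyMeasurable ?_
  filter_upwards [hs] with x hx
  exact hC x hx

lemma real_moment (σ : Measure ℝ) (hs : ∀ᵐ x ∂σ, x ∈ Set.Icc (0:ℝ) 1) (n : ℕ) :
    ∫ x, x ^ n ∂σ = (∫⁻ x, ENNReal.ofReal (x ^ n) ∂σ).toReal :=
  integral_eq_lintegral_of_nonneg_ae
    (by filter_upwards [hs] with x hx; exact pow_nonneg hx.1 n)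
    (continuous_pow n).aestronglyMeasurable

lemma measure_eq_of_moments (σ σ' : Measure ℝ) [IsFiniteMeasure σ] [IsFiniteMeasure σ']
    (hs : ∀ᵐ x ∂σ, x ∈ Set.Icc (0:ℝ) 1) (hs' : ∀ᵐ x ∂σ', x ∈ Set.Icc (0:ℝ) 1)
    (hm : ∀ n : ℕ, ∫ x, x ^ n ∂σ = ∫ x, x ^ n ∂σ') : σ = σ' := by
  have hpoly : ∀ q : Polynomial ℝ, ∫ x, q.eval x ∂σ = ∫ x, q.eval x ∂σ' := by
    intro q
    simp_rw [Polynomial.eval_eq_sum_range]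
    rw [integral_finset_sum _ (fun i _ =>
        (integrable_of_continuous σ hs (continuous_pow i)).const_mul _),
      integral_finset_sum _ (fun i _ =>
        (integrable_of_continuous σ' hs' (continuous_pow i)).const_mul _)]
    refine Finset.sum_congr rfl fun i _ => ?_
    rw [integral_const_mul, integral_const_mul, hm i]
  have hcont : ∀ g : ℝ → ℝ, Continuous g → ∫ x, g x ∂σ = ∫ x, g x ∂σ' := by
    intro g hg
    have hIg : Integrable g σ := integrable_of_continuous σ hs hg
    have hIg' : Integrable g σ' := integrable_of_continuous σ' hs' hg
    set C : ℝ := (σ Set.univ).toReal + (σ' Set.univ).toReal with hCdef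
    have hC0 : 0 ≤ C := by positivity
    have key : ∀ ε : ℝ, 0 < ε → |∫ x, g x ∂σ - ∫ x, g x ∂σ'| ≤ ε * C := by
      intro ε hε
      obtain ⟨q, hq⟩ := exists_polynomial_near_of_continuousOn 0 1 g hg.continuousOn ε hε
      have hIq : Integrable (fun x => q.eval x) σ :=
        integrable_of_continuous σ hs q.continuous_aeval
      have hIq' : Integrable (fun x => q.eval x) σ' :=
        integrable_of_continuous σ' hs' q.continuous_aeval
      have e1 : ‖∫ x, (g x - q.eval x) ∂σ‖ ≤ ε * (σ Set.univ).toReal := by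
        apply norm_integral_le_of_norm_le_const
        filter_upwards [hs] with x hx
        rw [Real.norm_eq_abs, abs_sub_comm]
        exact (hq x hx).le
      have e2 : ‖∫ x, (g x - q.eval x) ∂σ'‖ ≤ ε * (σ' Set.univ).toReal := by
        apply norm_integral_le_of_norm_le_const
        filter_upwards [hs'] with x hx
        rw [Real.norm_eq_abs, abs_sub_comm]
        exact (hq x hx).le
      have hd : (∫ x, g x ∂σ) - ∫ x, g x ∂σ' =
          (∫ x, (g x - q.eval x) ∂σ) - ∫ x, (g x - q.eval x) ∂σ' := by
        rw [integral_sub hIg hIq, integral_sub hIg' hIq', hpoly q]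
        ring
      rw [hd]
      have habs : |(∫ x, (g x - q.eval x) ∂σ) - ∫ x, (g x - q.eval x) ∂σ'| ≤
          |∫ x, (g x - q.eval x) ∂σ| + |∫ x, (g x - q.eval x) ∂σ'| := by
        rw [sub_eq_add_neg]
        exact (abs_add_le _ _).trans (by rw [abs_neg])
      rw [Real.norm_eq_abs] at e1 e2
      calc |(∫ x, (g x - q.eval x) ∂σ) - ∫ x, (g x - q.eval x) ∂σ'|
          ≤ |∫ x, (g x - q.eval x) ∂σ| + |∫ x, (g x - q.eval x) ∂σ'| := habs
        _ ≤ ε * (σ Set.univ).toReal + ε * (σ' Set.univ).toReal := add_le_add e1 e2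
        _ = ε * C := by rw [hCdef]; ring
    have h0 : |(∫ x, g x ∂σ) - ∫ x, g x ∂σ'| ≤ 0 := by
      refine le_of_forall_pos_le_add fun ε hε => ?_
      have hk := key (ε / (C + 1)) (by positivity)
      calc |(∫ x, g x ∂σ) - ∫ x, g x ∂σ'| ≤ ε / (C + 1) * C := hk
        _ ≤ ε / (C + 1) * (C + 1) := by
            apply mul_le_mul_of_nonneg_left (by linarith) (by positivity)
        _ = ε := by field_simp
        _ ≤ 0 + ε := by linarith
    have := abs_nonneg ((∫ x, g x ∂σ) - ∫ x, g x ∂σ')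
    have h2 : (∫ x, g x ∂σ) - ∫ x, g x ∂σ' = 0 := abs_eq_zero.mp (le_antisymm h0 this)
    linarith
  apply ext_of_forall_lintegral_eq_of_IsFiniteMeasure
  intro f
  have hg : Continuous fun x => (f x : ℝ) := NNReal.continuous_coe.comp f.continuous
  have hI : Integrable (fun x => (f x : ℝ)) σ := integrable_of_continuous σ hs hg
  have hI' : Integrable (fun x => (f x : ℝ)) σ' := integrable_of_continuous σ' hs' hg
  rw [lintegral_coe_eq_integral _ hI, lintegral_coe_eq_integral _ hI',
    hcont _ hg]

end Stmt17

open Stmt17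

/-- If `η` and `η̂` are measures on `(0,∞)` with
`∫₀^∞ (1 ∧ κ²) η(dκ) < ∞` and `∫₀^∞ (1 ∧ κ²) η̂(dκ) < ∞`, and for every `y ∈ (0,1)`
`∫₀^∞ (1/κ)(y/(1−y))² exp(−y/(κ(1−y))) η(dκ) = ∫₀^∞ (1/κ)(y/(1−y))² exp(−y/(κ(1−y))) η̂(dκ)`,
then `η = η̂`. -/
theorem stmt_17 (η η' : Measure ℝ)
    (hη : η (Set.Ioi (0 : ℝ))ᶜ = 0) (hη' : η' (Set.Ioi (0 : ℝ))ᶜ = 0)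
    (hint : (∫⁻ κ, ENNReal.ofReal (min 1 (κ ^ 2)) ∂η) < ⊤)
    (hint' : (∫⁻ κ, ENNReal.ofReal (min 1 (κ ^ 2)) ∂η') < ⊤)
    (heq : ∀ y ∈ Set.Ioo (0 : ℝ) 1,
      (∫⁻ κ, ENNReal.ofReal (κ⁻¹ * (y / (1 - y)) ^ 2 *
        Real.exp (-(y / (κ * (1 - y))))) ∂η) =
      ∫⁻ κ, ENNReal.ofReal (κ⁻¹ * (y / (1 - y)) ^ 2 *
        Real.exp (-(y / (κ * (1 - y))))) ∂η') :
    η = η' := by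
  haveI hνfin : IsFiniteMeasure (η.withDensity fden) := nu_finite η hint
  haveI hνfin' : IsFiniteMeasure (η'.withDensity fden) := nu_finite η' hint'
  set σ : Measure ℝ := (η.withDensity fden).map F with hσdef
  set σ' : Measure ℝ := (η'.withDensity fden).map F with hσ'def
  haveI hσfin : IsFiniteMeasure σ := by
    constructor
    rw [hσdef, Measure.map_apply F_measurable MeasurableSet.univ]
    exact measure_lt_top _ _
  haveI hσfin' : IsFiniteMeasure σ' := by
    constructor
    rw [hσ'def, Measure.map_apply F_measurable MeasurableSet.univ]
    exact measure_lt_top _ _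
  have hs : ∀ᵐ x ∂σ, x ∈ Set.Icc (0:ℝ) 1 := sigma_ae η hη
  have hs' : ∀ᵐ x ∂σ', x ∈ Set.Icc (0:ℝ) 1 := sigma_ae η' hη'
  have hM : ∀ n : ℕ, (∫⁻ x, ENNReal.ofReal (x ^ n) ∂σ) = ∫⁻ x, ENNReal.ofReal (x ^ n) ∂σ' := by
    intro n
    rw [hσdef, hσ'def, moment_chain, moment_chain]
    exact heq' η η' heq (by positivity : (0:ℝ) < (n : ℝ) + 1)
  have hm : ∀ n : ℕ, ∫ x, x ^ n ∂σ = ∫ x, x ^ n ∂σ' := by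
    intro n
    rw [real_moment σ hs n, real_moment σ' hs' n, hM n]
  have hσeq : σ = σ' := measure_eq_of_moments σ σ' hs hs' hm
  have hemb : MeasurableEmbedding F := F_measurable.measurableEmbedding F_injective
  have hν : η.withDensity fden = η'.withDensity fden := by
    ext s hsm
    have h1 := congrArg (fun μ : Measure ℝ => μ (F '' s)) hσeq
    simp only [hσdef, hσ'def] at h1
    rwa [hemb.map_apply, hemb.map_apply, F_injective.preimage_image] at h1
  have hae : ∀ᵐ κ ∂η, κ ∈ Set.Ioi (0:ℝ) := by
    rw [ae_iff]; exact hη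
  have hae' : ∀ᵐ κ ∂η', κ ∈ Set.Ioi (0:ℝ) := by
    rw [ae_iff]; exact hη'
  have h0 : ∀ᵐ κ ∂η, fden κ ≠ 0 := by
    filter_upwards [hae] with κ hκ
    simp only [fden, ne_eq, ENNReal.ofReal_eq_zero, not_le]
    have h1 : 0 < κ⁻¹ := inv_pos.mpr hκ
    positivity
  have h0' : ∀ᵐ κ ∂η', fden κ ≠ 0 := by
    filter_upwards [hae'] with κ hκ
    simp only [fden, ne_eq, ENNReal.ofReal_eq_zero, not_le]
    have h1 : 0 < κ⁻¹ := inv_pos.mpr hκ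
    positivity
  have htop : ∀ᵐ κ ∂η, fden κ ≠ ⊤ := Filter.Eventually.of_forall fun κ => ENNReal.ofReal_ne_top
  have htop' : ∀ᵐ κ ∂η', fden κ ≠ ⊤ := Filter.Eventually.of_forall fun κ => ENNReal.ofReal_ne_top
  calc η = (η.withDensity fden).withDensity (fun κ => (fden κ)⁻¹) :=
        (withDensity_inv_same fden_measurable h0 htop).symm
    _ = (η'.withDensity fden).withDensity (fun κ => (fden κ)⁻¹) := by rw [hν]
    _ = η' := withDensity_inv_same fden_measurable h0' htop'
end

section
/- Let W be an exponential random variable with rate 1 and let κ > 0. Then: (1) for every x ∈ [0,1), P( κW/(κW+1) > x ) = exp( − x/(κ(1−x)) ); (2) E[ (κW/(κW+1))² ] ≤ 2κ²; and (3) there exist universal constants C₃ > 0 and C₄ > 0 such that C₃ (1 ∧ κ²) ≤ E[ (κW/(κW+1))² ] ≤ C₄ (1 ∧ κ²) for all κ > 0. -/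
open MeasureTheory Filter Set

lemma aux_ftc (κ : ℝ) (hκ : 0 < κ) :
    ∫ t in (0:ℝ)..1, Real.exp (-(Real.sqrt t / κ)) ≤ 2 * κ ^ 2 := by
  set F : ℝ → ℝ := fun t => -2 * κ * (Real.exp (-(Real.sqrt t / κ)) * (Real.sqrt t + κ)) with hF
  have hcont : Continuous F := by
    apply Continuous.mul continuous_const
    exact ((Real.continuous_sqrt.div_const κ).neg.rexp).mul (Real.continuous_sqrt.add continuous_const)
  have hderiv : ∀ t ∈ Ioo (0:ℝ) 1, HasDerivAt F (Real.exp (-(Real.sqrt t / κ))) t := by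
    intro t ht
    have ht0 : 0 < t := ht.1
    have hs : HasDerivAt Real.sqrt (1/(2*Real.sqrt t)) t := Real.hasDerivAt_sqrt (ne_of_gt ht0)
    have hst : 0 < Real.sqrt t := Real.sqrt_pos.2 ht0
    have h2 : HasDerivAt (fun t => Real.exp (-(Real.sqrt t/κ)))
        (Real.exp (-(Real.sqrt t/κ)) * (-(1/(2*Real.sqrt t)/κ))) t := ((hs.div_const κ).neg).exp
    have h4 := (h2.mul (hs.add_const κ)).const_mul (-2*κ)
    refine h4.congr_deriv ?_
    field_simp [hst.ne', hκ.ne']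
    ring
  have hint : IntervalIntegrable (fun t => Real.exp (-(Real.sqrt t / κ))) volume 0 1 :=
    Continuous.intervalIntegrable ((Real.continuous_sqrt.div_const κ).neg.rexp) 0 1
  rw [intervalIntegral.integral_eq_sub_of_hasDeriv_right_of_le (by norm_num)
    hcont.continuousOn (fun t ht => (hderiv t ht).hasDerivWithinAt) hint]
  have h0 : F 0 = -2*κ*κ := by simp [hF]
  have h1 : F 1 = -2*κ*(Real.exp (-(1/κ)) * (1+κ)) := by simp [hF]
  rw [h0, h1]
  have h2 : 0 ≤ Real.exp (-(1/κ)) * (1+κ) := by positivity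
  nlinarith [h2]

lemma aux_main {Ω : Type*} [MeasurableSpace Ω] (μ : Measure Ω) [IsProbabilityMeasure μ]
    (W : Ω → ℝ) (hWmeas : Measurable W) (hWnn : ∀ ω, 0 ≤ W ω)
    (hWdist : ∀ x : ℝ, 0 ≤ x → μ {ω | x < W ω} = ENNReal.ofReal (Real.exp (-x)))
    (κ : ℝ) (hκ : 0 < κ) :
    (∀ x ∈ Set.Ico (0 : ℝ) 1,
      μ {ω | x < κ * W ω / (κ * W ω + 1)} = ENNReal.ofReal (Real.exp (-(x / (κ * (1 - x)))))) ∧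
    (Real.exp (-1) / 4 * min 1 (κ ^ 2) ≤ ∫ ω, (κ * W ω / (κ * W ω + 1)) ^ 2 ∂μ) ∧
    (∫ ω, (κ * W ω / (κ * W ω + 1)) ^ 2 ∂μ ≤ 2 * κ ^ 2) ∧
    (∫ ω, (κ * W ω / (κ * W ω + 1)) ^ 2 ∂μ ≤ 1) := by
  set Y : Ω → ℝ := fun ω => κ * W ω / (κ * W ω + 1) with hYdef
  have hden : ∀ ω, 0 < κ * W ω + 1 := by
    intro ω; have := mul_nonneg hκ.le (hWnn ω); linarith
  have hY0 : ∀ ω, 0 ≤ Y ω := fun ω => div_nonneg (mul_nonneg hκ.le (hWnn ω)) (hden ω).le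
  have hY1 : ∀ ω, Y ω < 1 := fun ω => (div_lt_one (hden ω)).2 (by linarith)
  -- Part 1
  have hpart1 : ∀ x ∈ Set.Ico (0 : ℝ) 1,
      μ {ω | x < Y ω} = ENNReal.ofReal (Real.exp (-(x / (κ * (1 - x))))) := by
    rintro x ⟨hx0, hx1⟩
    have hx1' : 0 < 1 - x := by linarith
    have hpos : 0 < κ * (1 - x) := by positivity
    have hset : {ω | x < Y ω} = {ω | x / (κ * (1 - x)) < W ω} := by
      ext ω
      simp only [hYdef, Set.mem_setOf_eq]
      rw [lt_div_iff₀ (hden ω), div_lt_iff₀ hpos]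
      constructor <;> intro h <;> nlinarith [hWnn ω]
    rw [hset, hWdist _ (by positivity)]
  -- measurability & integrability
  have hYmeas : Measurable Y := (hWmeas.const_mul κ).div ((hWmeas.const_mul κ).add_const 1)
  have hY2meas : Measurable (fun ω => Y ω ^ 2) := hYmeas.pow_const 2
  have hY2le : ∀ ω, Y ω ^ 2 ≤ 1 := fun ω => by nlinarith [hY0 ω, hY1 ω]
  have hint : Integrable (fun ω => Y ω ^ 2) μ := by
    apply Integrable.mono' (integrable_const (1:ℝ)) hY2meas.aestronglyMeasurable
    filter_upwards with ω
    rw [Real.norm_eq_abs, abs_of_nonneg (by positivity)]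
    exact hY2le ω
  have hI1 : ∫ ω, Y ω ^ 2 ∂μ ≤ 1 := by
    calc ∫ ω, Y ω ^ 2 ∂μ ≤ ∫ _, (1:ℝ) ∂μ :=
          integral_mono hint (integrable_const 1) (fun ω => hY2le ω)
      _ = 1 := by simp
  -- layer cake
  have hlc : ∫ ω, Y ω ^ 2 ∂μ = ∫ t in Ioi (0:ℝ), ((μ {a | t < Y a ^ 2}).toReal) :=
    hint.integral_eq_integral_meas_lt (ae_of_all _ fun ω => by positivity)
  set g : ℝ → ℝ := fun t => (μ {a | t < Y a ^ 2}).toReal with hgdef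
  set f : ℝ → ℝ := fun t => Real.exp (-(Real.sqrt t / (κ * (1 - Real.sqrt t)))) with hfdef
  have hgf : ∀ t ∈ Ioo (0:ℝ) 1, g t = f t := by
    intro t ht
    have hst : Real.sqrt t ∈ Set.Ico (0:ℝ) 1 :=
      ⟨Real.sqrt_nonneg t, (Real.sqrt_lt' one_pos).2 (by nlinarith [ht.2])⟩
    have hset2 : {a | t < Y a ^ 2} = {a | Real.sqrt t < Y a} := by
      ext a
      simp only [Set.mem_setOf_eq]
      constructor
      · intro h
        have hYa : 0 < Y a := by
          rcases (hY0 a).lt_or_eq with h' | h'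
          · exact h'
          · exfalso; rw [← h'] at h; norm_num at h; linarith [ht.1]
        exact (Real.sqrt_lt' hYa).2 h
      · intro h
        exact (Real.sqrt_lt' (lt_of_le_of_lt (Real.sqrt_nonneg t) h)).1 h
    rw [hgdef]
    simp only
    rw [hset2, hpart1 _ hst, ENNReal.toReal_ofReal (Real.exp_nonneg _)]
  have hg1 : ∀ t : ℝ, 1 ≤ t → g t = 0 := by
    intro t h
    have : {a | t < Y a ^ 2} = ∅ := by
      ext a; simp only [Set.mem_setOf_eq, Set.mem_empty_iff_false, iff_false, not_lt]
      exact le_trans (hY2le a) h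
    simp [hgdef, this]
  -- restrict integral to (0,1)
  have hsplit : ∫ t in Ioi (0:ℝ), g t = ∫ t in Ioo (0:ℝ) 1, g t := by
    have heq : EqOn g ((Ioo (0:ℝ) 1).indicator g) (Ioi 0) := by
      intro t ht
      by_cases h : t ∈ Ioo (0:ℝ) 1
      · rw [Set.indicator_of_mem h]
      · rw [Set.indicator_of_notMem h, hg1 t ?_]
        simp only [Set.mem_Ioo, not_and, not_lt] at h
        exact h ht
    rw [setIntegral_congr_fun measurableSet_Ioi heq, setIntegral_indicator measurableSet_Ioo,
      Set.inter_eq_self_of_subset_right Set.Ioo_subset_Ioi_self]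
  have hfg2 : ∫ t in Ioo (0:ℝ) 1, g t = ∫ t in Ioo (0:ℝ) 1, f t :=
    setIntegral_congr_fun measurableSet_Ioo hgf
  have hIeq : ∫ ω, Y ω ^ 2 ∂μ = ∫ t in Ioo (0:ℝ) 1, f t := by
    rw [hlc, hsplit, hfg2]
  -- integrability of f
  have hfmeas : Measurable f := by
    apply Real.measurable_exp.comp
    apply Measurable.neg
    exact Real.continuous_sqrt.measurable.div
      ((measurable_const.sub Real.continuous_sqrt.measurable).const_mul κ)
  have hfnn : ∀ t, 0 ≤ f t := fun t => Real.exp_nonneg _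
  have hfle1 : ∀ t ∈ Ioo (0:ℝ) 1, f t ≤ 1 := by
    intro t ht
    rw [hfdef]
    simp only
    rw [Real.exp_le_one_iff, neg_nonpos]
    have h1 : Real.sqrt t < 1 := (Real.sqrt_lt' one_pos).2 (by nlinarith [ht.2])
    apply div_nonneg (Real.sqrt_nonneg t)
    nlinarith
  have hfint : IntegrableOn f (Ioo (0:ℝ) 1) volume := by
    apply Measure.integrableOn_of_bounded (M := 1)
    · rw [Real.volume_Ioo]; exact ENNReal.ofReal_ne_top
    · exact hfmeas.aestronglyMeasurable
    · filter_upwards [ae_restrict_mem measurableSet_Ioo] with t ht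
      rw [Real.norm_eq_abs, abs_of_nonneg (hfnn t)]
      exact hfle1 t ht
  -- upper bound
  have hup : ∫ t in Ioo (0:ℝ) 1, f t ≤ 2 * κ ^ 2 := by
    have hgint : IntegrableOn (fun t => Real.exp (-(Real.sqrt t / κ))) (Ioo (0:ℝ) 1) volume := by
      apply Measure.integrableOn_of_bounded (M := 1)
      · rw [Real.volume_Ioo]; exact ENNReal.ofReal_ne_top
      · exact ((Real.continuous_sqrt.div_const κ).neg.rexp).measurable.aestronglyMeasurable
      · filter_upwards with t
        rw [Real.norm_eq_abs, abs_of_nonneg (Real.exp_nonneg _)]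
        rw [Real.exp_le_one_iff, neg_nonpos]
        positivity
    have hmono : ∫ t in Ioo (0:ℝ) 1, f t ≤ ∫ t in Ioo (0:ℝ) 1, Real.exp (-(Real.sqrt t / κ)) := by
      apply setIntegral_mono_on hfint hgint measurableSet_Ioo
      intro t ht
      rw [hfdef]
      simp only
      apply Real.exp_le_exp.2
      apply neg_le_neg
      have ha : 0 ≤ Real.sqrt t := Real.sqrt_nonneg t
      have h1 : Real.sqrt t < 1 := (Real.sqrt_lt' one_pos).2 (by nlinarith [ht.2])
      have hpos : 0 < κ * (1 - Real.sqrt t) := by nlinarith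
      exact div_le_div_of_nonneg_left ha hpos (by nlinarith)
    have heq2 : ∫ t in Ioo (0:ℝ) 1, Real.exp (-(Real.sqrt t / κ)) =
        ∫ t in (0:ℝ)..1, Real.exp (-(Real.sqrt t / κ)) := by
      rw [intervalIntegral.integral_of_le (by norm_num : (0:ℝ) ≤ 1), integral_Ioc_eq_integral_Ioo]
    linarith [aux_ftc κ hκ, heq2 ▸ hmono]
  -- lower bound
  set m : ℝ := min 1 (κ^2) / 4 with hmdef
  have hmin0 : 0 < min 1 (κ^2) := lt_min one_pos (by positivity)
  have hm0 : 0 < m := by rw [hmdef]; linarith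
  have hm1 : m ≤ 1/4 := by have := min_le_left 1 (κ^2); rw [hmdef]; linarith
  have hmκ : m ≤ κ^2/4 := by have := min_le_right 1 (κ^2); rw [hmdef]; linarith
  have hsub : Ioo (0:ℝ) m ⊆ Ioo 0 1 := Set.Ioo_subset_Ioo le_rfl (by linarith)
  have hlow : Real.exp (-1) * m ≤ ∫ t in Ioo (0:ℝ) 1, f t := by
    have hstep1 : ∫ t in Ioo (0:ℝ) m, Real.exp (-1) ≤ ∫ t in Ioo (0:ℝ) m, f t := by
      apply setIntegral_mono_on
      · exact integrableOn_const (by rw [Real.volume_Ioo]; exact ENNReal.ofReal_ne_top)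
      · exact hfint.mono_set hsub
      · exact measurableSet_Ioo
      · intro t ht
        rw [hfdef]
        simp only
        apply Real.exp_le_exp.2
        apply neg_le_neg
        have ht1 : Real.sqrt t < 1/2 := (Real.sqrt_lt' (by norm_num)).2 (by nlinarith [ht.2])
        have ht2 : Real.sqrt t < κ/2 := (Real.sqrt_lt' (by positivity)).2 (by nlinarith [ht.2])
        have hpos : 0 < κ * (1 - Real.sqrt t) := by nlinarith
        rw [div_le_one hpos]
        nlinarith [Real.sqrt_nonneg t]
    have hstep2 : ∫ t in Ioo (0:ℝ) m, f t ≤ ∫ t in Ioo (0:ℝ) 1, f t :=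
      setIntegral_mono_set hfint (ae_of_all _ fun t => hfnn t) (HasSubset.Subset.eventuallyLE hsub)
    have hconst : ∫ t in Ioo (0:ℝ) m, (Real.exp (-1) : ℝ) = m * Real.exp (-1) := by
      rw [setIntegral_const, Real.volume_real_Ioo_of_le (by linarith), smul_eq_mul]
      ring_nf
    rw [mul_comm, ← hconst]
    linarith [hstep1, hstep2]
  refine ⟨hpart1, ?_, ?_, hI1⟩
  · rw [hIeq]
    have : Real.exp (-1) / 4 * min 1 (κ ^ 2) = Real.exp (-1) * m := by rw [hmdef]; ring
    linarith [hlow]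
  · rw [hIeq]; exact hup

/-- Let `W` be an exponential random variable with rate `1`.  Then for every
`κ > 0`: (1) for every `x ∈ [0,1)`, `P(κW/(κW+1) > x) = exp(−x/(κ(1−x)))`;
(2) `E[(κW/(κW+1))²] ≤ 2κ²`; and (3) there are universal constants `C₃, C₄ > 0` with
`C₃ (1 ∧ κ²) ≤ E[(κW/(κW+1))²] ≤ C₄ (1 ∧ κ²)` for all `κ > 0`. -/
theorem stmt_18
    {Ω : Type*} [MeasurableSpace Ω] (μ : Measure Ω) [IsProbabilityMeasure μ]
    (W : Ω → ℝ) (hWmeas : Measurable W) (hWnn : ∀ ω, 0 ≤ W ω)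
    (hWdist : ∀ x : ℝ, 0 ≤ x → μ {ω | x < W ω} = ENNReal.ofReal (Real.exp (-x))) :
    (∀ κ : ℝ, 0 < κ → ∀ x ∈ Set.Ico (0 : ℝ) 1,
      μ {ω | x < κ * W ω / (κ * W ω + 1)} =
        ENNReal.ofReal (Real.exp (-(x / (κ * (1 - x)))))) ∧
    (∀ κ : ℝ, 0 < κ →
      (∫ ω, (κ * W ω / (κ * W ω + 1)) ^ 2 ∂μ) ≤ 2 * κ ^ 2) ∧
    (∃ C₃ C₄ : ℝ, 0 < C₃ ∧ 0 < C₄ ∧ ∀ κ : ℝ, 0 < κ →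
      C₃ * min 1 (κ ^ 2) ≤ (∫ ω, (κ * W ω / (κ * W ω + 1)) ^ 2 ∂μ) ∧
      (∫ ω, (κ * W ω / (κ * W ω + 1)) ^ 2 ∂μ) ≤ C₄ * min 1 (κ ^ 2)) := by
  refine ⟨fun κ hκ => (aux_main μ W hWmeas hWnn hWdist κ hκ).1,
    fun κ hκ => (aux_main μ W hWmeas hWnn hWdist κ hκ).2.2.1,
    Real.exp (-1) / 4, 2, by positivity, by norm_num, fun κ hκ => ?_⟩
  obtain ⟨-, hlow, hup, h1⟩ := aux_main μ W hWmeas hWnn hWdist κ hκ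
  refine ⟨hlow, ?_⟩
  rcases le_total (κ ^ 2) 1 with h | h
  · rw [min_eq_right h]; linarith
  · rw [min_eq_left h]; linarith
end
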